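/- For n > 2, let (SpC)_n ⊆ Δ[n] be the union of the images of the 2-simplices Δ[2] → Δ[n] corresponding to the monotone maps [2] → [n] with image {0, i, i+1}, for 0 < i < n. Then Sp_n ⊆ (SpC)_n and C_n ⊆ (SpC)_n; moreover the inclusion Sp_n → (SpC)_n is a finite composition of pushouts of the spine inclusion sp₂ : Sp₂ → Δ[2], and the inclusion C_n → (SpC)_n is a finite composition of pushouts of the left cone inclusion c₂ : C₂ → Δ[2]. -/

import Mathlib

open CategoryTheory CategoryTheory.GrothendieckTopology CategoryTheory.Limits Simplicial SSet Opposite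

noncomputable section

namespace BousfieldPaper

/-! ## Basic lifting-property classes of simplicial sets -/

/-- A Kan fibration: a map with the right lifting property against all horn inclusions. -/
def KanFibration {S T : SSet.{0}} (p : S ⟶ T) : Prop :=
  ∀ (n : ℕ) (i : Fin (n + 2)), HasLiftingProperty (Λ[n + 1, i].ι) p

/-- An acyclic (trivial) Kan fibration: a map with the right lifting property against
all boundary inclusions. -/
def TrivialKanFibration {S T : SSet.{0}} (p : S ⟶ T) : Prop :=
  ∀ n : ℕ, HasLiftingProperty (∂Δ[n].ι) p

/-- The class of maps with the right lifting property against every map in `T`. -/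
def rlpOf {C : Type*} [Category C] (T : MorphismProperty C) : MorphismProperty C :=
  fun _ _ p => ∀ ⦃A B : C⦄ (i : A ⟶ B), T i → HasLiftingProperty i p

/-- The class of maps with the left lifting property against every map in `T`. -/
def llpOf {C : Type*} [Category C] (T : MorphismProperty C) : MorphismProperty C :=
  fun _ _ i => ∀ ⦃S T' : C⦄ (p : S ⟶ T'), T p → HasLiftingProperty i p

/-- The saturation `llp(rlp(S))` of a class of maps. -/
def saturationOf {C : Type*} [Category C] (S : MorphismProperty C) : MorphismProperty C :=
  llpOf (rlpOf S)

/-- The class of all horn inclusions (up to isomorphism of arrows). -/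
def HornClass : MorphismProperty SSet.{0} := fun _ _ f =>
  ∃ (n : ℕ) (i : Fin (n + 2)), Nonempty (Arrow.mk f ≅ Arrow.mk (Λ[n + 1, i].ι))

/-- The class of left horn inclusions `Λ[n,0] → Δ[n]`, `n ≥ 2` (up to isomorphism of arrows). -/
def LeftHornClass : MorphismProperty SSet.{0} := fun _ _ f =>
  ∃ n : ℕ, 2 ≤ n ∧ Nonempty (Arrow.mk f ≅ Arrow.mk (Λ[n, 0].ι))

/-- Anodyne maps: the saturation of the class of horn inclusions. -/
def Anodyne : MorphismProperty SSet.{0} := saturationOf HornClass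

/-- A weak homotopy equivalence of simplicial sets (in the Kan--Quillen sense):
a map admitting a factorization as an anodyne map followed by an acyclic Kan fibration. -/
def WeakHomotopyEquivalence {S T : SSet.{0}} (f : S ⟶ T) : Prop :=
  ∃ (Z : SSet.{0}) (i : S ⟶ Z) (p : Z ⟶ T),
    Anodyne i ∧ TrivialKanFibration p ∧ i ≫ p = f

/-! ## Saturated classes -/

/-- `f` is a retract of `g` in the arrow category. -/
def IsRetractOf {C : Type*} [Category C] {X Y X' Y' : C} (f : X ⟶ Y) (g : X' ⟶ Y') : Prop :=
  ∃ (i : Arrow.mk f ⟶ Arrow.mk g) (r : Arrow.mk g ⟶ Arrow.mk f), i ≫ r = 𝟙 _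

/-- The inclusion functor of the subposet `{x | x < j}` of `J`. -/
def iioFunctor {J : Type} [Preorder J] (j : J) : Set.Iio j ⥤ J :=
  Monotone.functor (f := fun x => (x : J)) (fun _ _ h => h)

/-- The cocone on the restriction of `F : J ⥤ C` to `{x | x < j}` with apex `F.obj j`. -/
def coconeBelow {J : Type} [Preorder J] {C : Type*} [Category C]
    (F : J ⥤ C) (j : J) : Cocone (iioFunctor j ⋙ F) where
  pt := F.obj j
  ι :=
    { app := fun x => F.map (homOfLE (le_of_lt x.2))
      naturality := fun x y g => by
        dsimp [iioFunctor, Monotone.functor]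
        rw [← F.map_comp, Category.comp_id]
        congr 1 }

/-- A class of morphisms of simplicial sets is *saturated* (weakly saturated) if it is closed
under pushouts (cobase change), retracts and transfinite compositions. -/
structure IsSaturated (A : MorphismProperty SSet.{0}) : Prop where
  pushout : ∀ ⦃X Y X' Y' : SSet.{0}⦄ (f : X ⟶ Y) (u : X ⟶ X') (v : Y ⟶ Y') (f' : X' ⟶ Y'),
    IsPushout f u v f' → A f → A f'
  retract : ∀ ⦃X Y X' Y' : SSet.{0}⦄ (f : X ⟶ Y) (g : X' ⟶ Y'),
    IsRetractOf f g → A g → A f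
  transfinite : ∀ (J : Type) (_ : LinearOrder J) (_ : SuccOrder J) (_ : OrderBot J)
    (_ : WellFoundedLT J) (F : J ⥤ SSet.{0}) (c : Cocone F) (_ : IsColimit c),
    (∀ j : J, ¬IsMax j → A (F.map (homOfLE (Order.le_succ j)))) →
    (∀ j : J, Order.IsSuccLimit j → Nonempty (IsColimit (coconeBelow F j))) →
    A (c.ι.app ⊥)

/-- Right cancellation property for monomorphisms. -/
def RightCancel (A : MorphismProperty SSet.{0}) : Prop :=
  ∀ ⦃X Y Z : SSet.{0}⦄ (u : X ⟶ Y) (v : Y ⟶ Z),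
    Mono u → Mono v → A (u ≫ v) → A u → A v

/-- Left cancellation property for monomorphisms. -/
def LeftCancel (A : MorphismProperty SSet.{0}) : Prop :=
  ∀ ⦃X Y Z : SSet.{0}⦄ (u : X ⟶ Y) (v : Y ⟶ Z),
    Mono u → Mono v → A (u ≫ v) → A v → A u

/-- 3-for-2 for monomorphisms: both left and right cancellation. -/
def ThreeForTwo (A : MorphismProperty SSet.{0}) : Prop :=
  RightCancel A ∧ LeftCancel A

/-! ## The left cone, the spine, and related subcomplexes of the standard simplex -/

/-- The left cone `C n ⊆ Δ[n]`: the union of the images of the initial edges `0 → i`. -/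
def coneSub (n : ℕ) : Subfunctor Δ[n] where
  obj m := {α | ∃ i : ℕ, 1 ≤ i ∧ i ≤ n ∧
    ∀ j, (stdSimplex.asOrderHom α j : ℕ) = 0 ∨ (stdSimplex.asOrderHom α j : ℕ) = i}
  map := by
    rintro m m' g α ⟨i, hi1, hin, h⟩
    exact ⟨i, hi1, hin, fun j => h _⟩

/-- The spine `Sp n ⊆ Δ[n]`: the union of the images of the edges `i → i+1`. -/
def spineSub (n : ℕ) : Subfunctor Δ[n] where
  obj m := {α | ∃ i : ℕ, i + 1 ≤ n ∧
    ∀ j, (stdSimplex.asOrderHom α j : ℕ) = i ∨ (stdSimplex.asOrderHom α j : ℕ) = i + 1}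
  map := by
    rintro m m' g α ⟨i, hi, h⟩
    exact ⟨i, hi, fun j => h _⟩

/-- The union `(SpC) n ⊆ Δ[n]` of the images of the `2`-simplices `{0, i, i+1}`, `0 < i < n`. -/
def spcSub (n : ℕ) : Subfunctor Δ[n] where
  obj m := {α | ∃ i : ℕ, 0 < i ∧ i + 1 ≤ n ∧
    ∀ j, (stdSimplex.asOrderHom α j : ℕ) = 0 ∨ (stdSimplex.asOrderHom α j : ℕ) = i ∨ (stdSimplex.asOrderHom α j : ℕ) = i + 1}
  map := by
    rintro m m' g α ⟨i, h₀, h₁, h⟩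
    exact ⟨i, h₀, h₁, fun j => h _⟩

/-- The canonical inclusion `k n : C n → Λ[n, 0]` of the left cone into the left horn. -/
def coneToHorn (n : ℕ) (hn : 2 ≤ n) : ((coneSub n).toFunctor : SSet.{0}) ⟶ Λ[n, 0] where
  app m := ↾fun α => by
    refine ⟨α.1, ?_⟩
    obtain ⟨i, hi1, hin, h⟩ := α.2
    intro hu
    rw [Set.eq_univ_iff_forall] at hu
    obtain ⟨kv, hkv0, hkvi, hkvlt⟩ : ∃ kv : ℕ, kv ≠ 0 ∧ kv ≠ i ∧ kv < n + 1 := by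
      rcases eq_or_ne i 1 with hc | hc
      · exact ⟨2, by omega, by omega, by omega⟩
      · exact ⟨1, by omega, by omega, by omega⟩
    rcases hu ⟨kv, hkvlt⟩ with hr | h0
    · obtain ⟨j, hj⟩ := hr
      have hval := congrArg Fin.val hj
      rcases h j with h' | h' <;> simp_all
    · have := congrArg Fin.val (Set.mem_singleton_iff.1 h0)
      simp_all

/-- The nerve `IΔ^n` of the free groupoid (codiscrete groupoid) on `{0, …, n}`:
its `m`-simplices are all (not necessarily monotone) functions `Fin (m+1) → Fin (n+1)`. -/
def IDelta (n : ℕ) : SSet.{0} where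
  obj m := Fin (m.unop.len + 1) → Fin (n + 1)
  map f := ↾fun α => α ∘ f.unop.toOrderHom

/-- The canonical inclusion `Δ[n] → IΔ^n`. -/
def iDeltaIncl (n : ℕ) : (Δ[n] : SSet.{0}) ⟶ IDelta n where
  app m := ↾fun α => ⇑(stdSimplex.asOrderHom α)

/-- The vertex `k : Δ[0] → IΔ^n`. -/
def iDeltaVertex (n : ℕ) (k : Fin (n + 1)) : (Δ[0] : SSet.{0}) ⟶ IDelta n where
  app m := ↾fun _ => fun _ => k


/-! ## Bisimplicial sets, the box product and the slash construction -/

/-- Bisimplicial sets: presheaves of sets on `Δ × Δ`. -/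
abbrev BSSet : Type 1 := (SimplexCategory × SimplexCategory)ᵒᵖ ⥤ Type

/-- The box product `A □ B` of two simplicial sets: `(A □ B)_{n,m} = A_n × B_m`. -/
def box (A B : SSet.{0}) : BSSet where
  obj nm := A.obj (op nm.unop.1) × B.obj (op nm.unop.2)
  map f := ↾fun p => ⟨A.map f.unop.1.op p.1, B.map f.unop.2.op p.2⟩

/-- The box product, functorially in its second variable. -/
def boxFunctor (A : SSet.{0}) : SSet.{0} ⥤ BSSet where
  obj B := box A B
  map g :=
    { app := fun nm => ↾fun p => ⟨p.1, g.app _ p.2⟩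
      naturality := fun nm nm' f => by
        ext p
        apply Prod.ext
        · rfl
        · exact NatTrans.naturality_apply g f.unop.2.op p.2 }

/-- The box product is natural in its first variable. -/
def boxHomLeft {A A' : SSet.{0}} (f : A ⟶ A') (B : SSet.{0}) :
    (boxFunctor A).obj B ⟶ (boxFunctor A').obj B where
  app nm := ↾fun p => ⟨f.app _ p.1, p.2⟩
  naturality nm nm' g := by
    ext p
    apply Prod.ext
    · change f.app _ (A.map g.unop.1.op p.1) = A'.map g.unop.1.op (f.app _ p.1)
      exact NatTrans.naturality_apply f g.unop.1.op p.1
    · rfl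

lemma boxHomLeft_natural {A A' : SSet.{0}} (f : A ⟶ A') {B B' : SSet.{0}} (g : B ⟶ B') :
    (boxFunctor A).map g ≫ boxHomLeft f B' = boxHomLeft f B ≫ (boxFunctor A').map g := rfl

/-- The simplicial set `A \ X` with `m`-simplices the bisimplicial maps `A □ Δ[m] → X`. -/
def slash (A : SSet.{0}) (X : BSSet) : SSet.{0} :=
  SSet.stdSimplex.op ⋙ ((boxFunctor A).op ⋙ yoneda.obj X)

/-- Functoriality (contravariance) of `A \ X` in `A`. -/
def slashMap {A A' : SSet.{0}} (f : A ⟶ A') (X : BSSet) : slash A' X ⟶ slash A X :=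
  Functor.whiskerLeft SSet.stdSimplex.op
    (Functor.whiskerRight (NatTrans.op
      { app := fun B => boxHomLeft f B
        naturality := fun _ _ g => (boxHomLeft_natural f g).symm }) (yoneda.obj X))

lemma slashMap_id (A : SSet.{0}) (X : BSSet) : slashMap (𝟙 A) X = 𝟙 (slash A X) := rfl

lemma slashMap_comp {A A' A'' : SSet.{0}} (f : A ⟶ A') (g : A' ⟶ A'') (X : BSSet) :
    slashMap (f ≫ g) X = slashMap g X ≫ slashMap f X := rfl


/-! ## Columns, Reedy fibrancy, Segal and Bousfield maps -/

/-- The `n`-th column `X_n := Δ[n] \ X` of a bisimplicial set. -/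
def col (n : ℕ) (X : BSSet) : SSet.{0} := slash Δ[n] X

/-- The face map `d_i : X_{n+1} → X_n` between columns. -/
def colδ {n : ℕ} (i : Fin (n + 2)) (X : BSSet) : col (n + 1) X ⟶ col n X :=
  slashMap (SSet.stdSimplex.map (SimplexCategory.δ i)) X

/-- The degeneracy map `s_i : X_n → X_{n+1}` between columns. -/
def colσ {n : ℕ} (i : Fin (n + 1)) (X : BSSet) : col n X ⟶ col (n + 1) X :=
  slashMap (SSet.stdSimplex.map (SimplexCategory.σ i)) X

/-- A bisimplicial set is `v`-fibrant (Reedy fibrant) if `f \ X` is a Kan fibration for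
every monomorphism `f` of simplicial sets. -/
def VFibrant (X : BSSet) : Prop :=
  ∀ ⦃A B : SSet.{0}⦄ (f : A ⟶ B), Mono f → KanFibration (slashMap f X)

/-- The `n`-th Bousfield map `β_n = c_n \ X : X_n → C_n \ X`. -/
def bousfieldMap (n : ℕ) (X : BSSet) : col n X ⟶ slash (coneSub n).toFunctor X :=
  slashMap (coneSub n).ι X

/-- The `n`-th Segal map `ξ_n = sp_n \ X : X_n → Sp_n \ X`. -/
def segalMap (n : ℕ) (X : BSSet) : col n X ⟶ slash (spineSub n).toFunctor X :=
  slashMap (spineSub n).ι X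

/-- A Bousfield-Segal space: a `v`-fibrant bisimplicial set whose Bousfield maps `β_n`,
`n ≥ 2`, are weak homotopy equivalences. -/
def IsBSegal (X : BSSet) : Prop :=
  VFibrant X ∧ ∀ n : ℕ, 2 ≤ n → WeakHomotopyEquivalence (bousfieldMap n X)

/-- A Segal space: a `v`-fibrant bisimplicial set whose Segal maps `ξ_n`,
`n ≥ 2`, are weak homotopy equivalences. -/
def IsSegal (X : BSSet) : Prop :=
  VFibrant X ∧ ∀ n : ℕ, 2 ≤ n → WeakHomotopyEquivalence (segalMap n X)

/-- The map `IΔ^1 \ X → X_0` induced by the vertex `{0} : Δ[0] → IΔ^1`. -/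
def completenessMap (X : BSSet) : slash (IDelta 1) X ⟶ col 0 X :=
  slashMap (iDeltaVertex 1 0) X

/-- A complete Bousfield-Segal space. -/
def IsCompleteBSegal (X : BSSet) : Prop :=
  IsBSegal X ∧ WeakHomotopyEquivalence (completenessMap X)

/-- A bisimplicial set is homotopically constant if every map of the simplex category
induces a weak homotopy equivalence between the corresponding columns. -/
def HomotopicallyConstant (X : BSSet) : Prop :=
  ∀ ⦃a b : SimplexCategory⦄ (f : a ⟶ b),
    WeakHomotopyEquivalence (slashMap (SSet.stdSimplex.map f) X)

/-! ## Vertices, edges and the fraction operation -/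

/-- The vertices of a simplicial set. -/
def vert (S : SSet.{0}) : Type := S.obj (op (SimplexCategory.mk 0))

/-- Two vertices of a simplicial set lie in the same connected component, i.e. they have
equal classes in `π₀`. -/
def hSim (S : SSet.{0}) (a b : vert S) : Prop :=
  Relation.EqvGen (fun v w : vert S => ∃ e : S.obj (op (SimplexCategory.mk 1)),
    SimplicialObject.δ S 1 e = v ∧ SimplicialObject.δ S 0 e = w) a b

/-- The edge `0 → i` of the left cone `C n`. -/
def coneEdge (n : ℕ) (i : Fin (n + 1)) (hi : i ≠ 0) :
    (Δ[1] : SSet.{0}) ⟶ (coneSub n).toFunctor where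
  app m := ↾fun β => by
    refine ⟨(SSet.stdSimplex.map (SimplexCategory.mkOfLe 0 i (Fin.zero_le i))).app m β, ?_⟩
    have hne : (i : ℕ) ≠ 0 := fun h => hi (by apply Fin.ext; simpa using h)
    refine ⟨(i : ℕ), by omega, i.is_le, fun j => ?_⟩
    have key : ∀ k : Fin 2,
        (((SimplexCategory.mkOfLe (0 : Fin (n + 1)) i (Fin.zero_le i)).toOrderHom k : Fin (n+1)) : ℕ) = 0 ∨
        (((SimplexCategory.mkOfLe (0 : Fin (n + 1)) i (Fin.zero_le i)).toOrderHom k : Fin (n+1)) : ℕ) = i := by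
      intro k
      match k with
      | 0 => left; rfl
      | 1 => right; rfl
    exact key _
  naturality m m' g := by
    ext β
    apply Subtype.ext
    exact NatTrans.naturality_apply (SSet.stdSimplex.map
      (SimplexCategory.mkOfLe 0 i (Fin.zero_le i))) g β

variable (X : BSSet)

/-- Vertex component of the restriction along the edge `0 → 2` of `C₂` (the "numerator"). -/
def eF (w : vert (slash (coneSub 2).toFunctor X)) : vert (col 1 X) :=
  (slashMap (coneEdge 2 2 (by decide)) X).app _ w

/-- Vertex component of the restriction along the edge `0 → 1` of `C₂` (the "denominator"). -/
def eG (w : vert (slash (coneSub 2).toFunctor X)) : vert (col 1 X) :=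
  (slashMap (coneEdge 2 1 (by decide)) X).app _ w

/-- Vertex component of the face map `d_i : X_1 → X_0`. -/
def dV (i : Fin 2) (f : vert (col 1 X)) : vert (col 0 X) := (colδ i X).app _ f

/-- Vertex component of the degeneracy `s_0 : X_0 → X_1`; `oneV X x` is `1_x`. -/
def oneV (x : vert (col 0 X)) : vert (col 1 X) := (colσ 0 X).app _ x

/-- The fraction operation determined by a section `μ₂` of the Bousfield map `β₂`:
`f/g := d₀ (μ₂ (f, g))`. -/
def fracV (μ₂ : slash (coneSub 2).toFunctor X ⟶ col 2 X)
    (w : vert (slash (coneSub 2).toFunctor X)) : vert (col 1 X) :=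
  (colδ 0 X).app _ (μ₂.app _ w)

lemma dV_oneV (x : vert (col 0 X)) (i : Fin 2) : dV X i (oneV X x) = x := by
  have h : colσ (0 : Fin 1) X ≫ colδ i X = 𝟙 (col 0 X) := by
    rw [colδ, colσ]
    erw [← slashMap_comp, ← Functor.map_comp]
    have : SimplexCategory.δ i ≫ SimplexCategory.σ (0 : Fin 1) = 𝟙 (SimplexCategory.mk 0) := by
      fin_cases i
      · exact SimplexCategory.δ_comp_σ_self
      · exact SimplexCategory.δ_comp_σ_succ
    rw [this]
    erw [CategoryTheory.Functor.map_id, slashMap_id]; rfl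
  exact ConcreteCategory.congr_hom (congrArg (fun (t : col 0 X ⟶ col 0 X) => t.app (op (SimplexCategory.mk 0)))
    h) x

/-- The identity morphism `1_x` as an element of the hom-space `X₁(x,x)`. -/
def idHom (x : vert (col 0 X)) :
    {f : vert (col 1 X) // dV X 1 f = x ∧ dV X 0 f = x} :=
  ⟨oneV X x, dV_oneV X x 1, dV_oneV X x 0⟩


/-! ## Cellularity, pushouts of coproducts, finite compositions of pushouts -/

/-- `f` is a pushout (cobase change) of `g`. -/
def IsPushoutOf {C : Type*} [Category C] {A B X Y : C} (g : A ⟶ B) (f : X ⟶ Y) : Prop :=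
  ∃ (u : A ⟶ X) (v : B ⟶ Y), IsPushout g u v f

/-- `f` is a pushout of a coproduct of maps belonging to the class `S`. -/
def IsPushoutOfCoproductOf (S : MorphismProperty SSet.{0}) {P Q : SSet.{0}} (f : P ⟶ Q) : Prop :=
  ∃ (ι : Type) (A B : ι → SSet.{0}) (g : ∀ i, A i ⟶ B i),
    (∀ i, S (g i)) ∧
      IsPushoutOf (Limits.Sigma.desc (fun i => g i ≫ Limits.Sigma.ι B i) : (∐ A) ⟶ (∐ B)) f

/-- `f` is cellular with respect to the class `S`: it is a (transfinite, here `ℕ`-indexed)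
composition of pushouts of coproducts of maps of `S`. -/
def IsCellularIn (S : MorphismProperty SSet.{0}) {X Y : SSet.{0}} (f : X ⟶ Y) : Prop :=
  ∃ (F : ℕ ⥤ SSet.{0}) (c : Cocone F) (_ : IsColimit c) (e₀ : F.obj 0 ≅ X) (e : c.pt ≅ Y),
    (∀ m : ℕ, IsPushoutOfCoproductOf S (F.map (homOfLE (Nat.le_succ m)))) ∧
      f = e₀.inv ≫ c.ι.app 0 ≫ e.hom

/-- `f` is a finite composition of pushouts of `g`. -/
inductive FinCompPushoutsOf {A B : SSet.{0}} (g : A ⟶ B) : ∀ {X Y : SSet.{0}}, (X ⟶ Y) → Prop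
  /-- A single pushout of `g`. -/
  | of {X Y : SSet.{0}} (f : X ⟶ Y) : IsPushoutOf g f → FinCompPushoutsOf g f
  /-- A pushout of `g` followed by a finite composition of pushouts of `g`. -/
  | comp {X Y Z : SSet.{0}} (f₁ : X ⟶ Y) (f₂ : Y ⟶ Z) :
      IsPushoutOf g f₁ → FinCompPushoutsOf g f₂ → FinCompPushoutsOf g (f₁ ≫ f₂)

/-! ## Lattice operations on subpresheaves -/

variable {C : Type*} [Category C]

/-- Intersection of two subpresheaves. -/
def subInf {F : Cᵒᵖ ⥤ Type} (G G' : Subfunctor F) : Subfunctor F where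
  obj U := G.obj U ∩ G'.obj U
  map i := fun _ hx => ⟨G.map i hx.1, G'.map i hx.2⟩

/-- Union of two subpresheaves. -/
def subSup {F : Cᵒᵖ ⥤ Type} (G G' : Subfunctor F) : Subfunctor F where
  obj U := G.obj U ∪ G'.obj U
  map i := by
    rintro x (hx | hx)
    · exact Or.inl (G.map i hx)
    · exact Or.inr (G'.map i hx)

lemma subInf_le_left {F : Cᵒᵖ ⥤ Type} (G G' : Subfunctor F) : subInf G G' ≤ G :=
  fun _ => Set.inter_subset_left

lemma le_subSup_left {F : Cᵒᵖ ⥤ Type} (G G' : Subfunctor F) : G ≤ subSup G G' :=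
  fun _ => Set.subset_union_left

/-! ## The coface `d¹` and the left cone -/

/-- The coface map `d¹ : Δ[n] → Δ[n+1]`. -/
def d1Map (n : ℕ) : (Δ[n] : SSet.{0}) ⟶ Δ[n + 1] :=
  SSet.stdSimplex.map (SimplexCategory.δ 1)

/-- The restriction of `d¹` to a map `C n → C (n+1) ∩ d¹[Δ[n]]`. -/
def coneToInter (n : ℕ) : ((coneSub n).toFunctor : SSet.{0}) ⟶
    (subInf (coneSub (n + 1)) (Subfunctor.range (d1Map n))).toFunctor where
  app m := ↾fun α => by
    refine ⟨(d1Map n).app m α.1, ?_, ⟨α.1, rfl⟩⟩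
    obtain ⟨i, hi1, hin, h⟩ := α.2
    refine ⟨i + 1, by omega, by omega, fun j => ?_⟩
    have key : stdSimplex.asOrderHom ((d1Map n).app m α.1) j
        = (1 : Fin (n + 2)).succAbove (stdSimplex.asOrderHom α.1 j) := rfl
    rcases h j with h' | h'
    · left
      have h0 : stdSimplex.asOrderHom α.1 j = 0 := by
        apply Fin.ext; exact h'
      rw [key, h0, Fin.succAbove_of_castSucc_lt]
      · simp
      · simp
    · right
      rw [key, Fin.succAbove_of_le_castSucc]
      · simp [Fin.val_succ, h']
      · rw [Fin.le_def]
        simpa using by omega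
  naturality m m' g := by
    ext α
    apply Subtype.ext
    exact NatTrans.naturality_apply (d1Map n) g α.1

/-! ## Horizontally constant bisimplicial sets and closure properties -/

/-- `p₁* A`: the horizontally constant bisimplicial set with `(p₁* A)_{n,m} = A_n`. -/
def pHorizontal (A : SSet.{0}) : BSSet where
  obj nm := A.obj (op nm.unop.1)
  map f := A.map f.unop.1.op

/-- A class of maps of bisimplicial sets is stable under pullbacks. -/
def StableUnderPullbacksB (F : MorphismProperty BSSet) : Prop :=
  ∀ ⦃W X Y Z : BSSet⦄ (p' : W ⟶ X) (f' : W ⟶ Z) (f : X ⟶ Y) (p : Z ⟶ Y),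
    IsPullback p' f' f p → F f → F f'

/-- A class of maps of bisimplicial sets is stable under retracts. -/
def StableUnderRetractsB (F : MorphismProperty BSSet) : Prop :=
  ∀ ⦃X Y X' Y' : BSSet⦄ (f : X ⟶ Y) (g : X' ⟶ Y'), IsRetractOf f g → F g → F f

/-- A class of maps of bisimplicial sets is closed under sequential (inverse) limits:
limits of towers of arrows belonging to the class again belong to the class. -/
def ClosedUnderSequentialLimitsB (F : MorphismProperty BSSet) : Prop :=
  ∀ (G : ℕᵒᵖ ⥤ Arrow BSSet), (∀ n : ℕᵒᵖ, F (G.obj n).hom) →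
    ∀ (c : Cone G), IsLimit c → F c.pt.hom


lemma typePushout {S T A B : Type} (ι : S ⟶ T) (u : S ⟶ A) (v : T ⟶ B) (f : A ⟶ B)
    (comm : ι ≫ v = u ≫ f)
    (hf : Function.Injective f) (hv : Function.Injective v)
    (cover : ∀ b : B, (∃ a, f a = b) ∨ (∃ t, v t = b))
    (inter : ∀ t : T, (∃ a, f a = v t) → ∃ s, ι s = t) :
    IsPushout ι u v f := by
  classical
  have comm' : ∀ s, v (ι s) = f (u s) := fun s => ConcreteCategory.congr_hom comm s
  refine ⟨⟨comm⟩, ⟨?_⟩⟩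
  refine PushoutCocone.IsColimit.mk comm
    (fun s => ↾fun b => if h : ∃ a, f a = b then s.inr h.choose
      else s.inl ((cover b).resolve_left h).choose) ?_ ?_ ?_
  · intro s
    ext t
    show (if h : ∃ a, f a = v t then s.inr h.choose else _) = s.inl t
    split_ifs with h
    · obtain ⟨s₀, rfl⟩ := inter t h
      have : h.choose = u s₀ := hf (h.choose_spec.trans (comm' s₀))
      rw [this]
      exact (ConcreteCategory.congr_hom s.condition s₀).symm
    · have := ((cover (v t)).resolve_left h).choose_spec
      rw [hv this]
  · intro s
    ext a
    show (if h : ∃ a', f a' = f a then s.inr h.choose else _) = s.inr a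
    have h : ∃ a', f a' = f a := ⟨a, rfl⟩
    rw [dif_pos h, hf h.choose_spec]
  · intro s m h₁ h₂
    ext b
    show m b = (if h : ∃ a, f a = b then s.inr h.choose else _)
    split_ifs with h
    · exact (congrArg m h.choose_spec.symm).trans (ConcreteCategory.congr_hom h₂ h.choose)
    · exact (congrArg m ((cover b).resolve_left h).choose_spec.symm).trans
        (ConcreteCategory.congr_hom h₁ _)

lemma isPushout_of_app {X Y Z W : SSet.{0}} {f : X ⟶ Y} {g : X ⟶ Z} {h : Y ⟶ W} {i : Z ⟶ W}
    (comm : f ≫ h = g ≫ i)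
    (H : ∀ m, IsPushout (f.app m) (g.app m) (h.app m) (i.app m)) :
    IsPushout f g h i := by
  have sq : CommSq f g h i := ⟨comm⟩
  refine ⟨sq, ⟨evaluationJointlyReflectsColimits _ (fun m => ?_)⟩⟩
  let e : span (f.app m) (g.app m) ≅ span f g ⋙ (evaluation _ _).obj m :=
    NatIso.ofComponents (fun j => by
      cases j with
      | none => exact Iso.refl _
      | some j => cases j <;> exact Iso.refl _)
      (by rintro _ _ (_|_|_) <;> aesop_cat)
  refine (IsColimit.precomposeHomEquiv e _) ((H m).isColimit.ofIsoColimit ?_)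
  refine Cocones.ext (Iso.refl _) ?_
  rintro (_|_|_) <;> rfl


/-- The monotone map `[2] → [n]`, `0 ↦ 0`, `1 ↦ k+1`, `2 ↦ k+2`. -/
def tmap (n k : ℕ) (h : k + 2 ≤ n) : (⦋2⦌ : SimplexCategory) ⟶ ⦋n⦌ :=
  SimplexCategory.mkHom
    ⟨fun j => ⟨if (j : ℕ) = 0 then 0 else k + (j : ℕ), by
        have := j.isLt; split <;> omega⟩,
     fun a b hab => by
        simp only [Fin.mk_le_mk]
        have : (a : ℕ) ≤ b := hab
        split_ifs <;> omega⟩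

/-- The 2-simplex `Δ[2] → Δ[n]` with vertices `0, k+1, k+2`. -/
def tσ (n k : ℕ) (h : k + 2 ≤ n) : (Δ[2] : SSet.{0}) ⟶ Δ[n] :=
  SSet.stdSimplex.map (tmap n k h)

lemma tσ_val {n k : ℕ} (h : k + 2 ≤ n) {m : SimplexCategoryᵒᵖ} (γ : Δ[2].obj m)
    (j : Fin (m.unop.len + 1)) :
    (stdSimplex.asOrderHom ((tσ n k h).app m γ) j : ℕ) =
      if (stdSimplex.asOrderHom γ j : ℕ) = 0 then 0 else k + (stdSimplex.asOrderHom γ j : ℕ) := rfl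

lemma tσ_injective {n k : ℕ} (h : k + 2 ≤ n) (m : SimplexCategoryᵒᵖ) :
    Function.Injective ((tσ n k h).app m) := by
  intro γ γ' hγ
  have hv : ∀ j, (stdSimplex.asOrderHom γ j : ℕ) = (stdSimplex.asOrderHom γ' j : ℕ) := by
    intro j
    have h1 := tσ_val h γ j
    have h2 := tσ_val h γ' j
    rw [hγ] at h1
    have := h1.symm.trans h2
    split_ifs at this <;> omega
  apply SSet.stdSimplex.objEquiv.injective
  apply SimplexCategory.Hom.ext
  ext j
  exact hv j

lemma tσ_preimage {n k : ℕ} (h : k + 2 ≤ n) {m : SimplexCategoryᵒᵖ} (α : Δ[n].obj m)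
    (hα : ∀ j, (stdSimplex.asOrderHom α j : ℕ) = 0 ∨ (stdSimplex.asOrderHom α j : ℕ) = k + 1 ∨
      (stdSimplex.asOrderHom α j : ℕ) = k + 2) :
    ∃ γ : Δ[2].obj m, (tσ n k h).app m γ = α := by
  let F : Fin ((unop m).len + 1) →o Fin 3 :=
    ⟨fun j => ⟨if (stdSimplex.asOrderHom α j : ℕ) = 0 then 0 else
        if (stdSimplex.asOrderHom α j : ℕ) = k + 1 then 1 else 2, by split_ifs <;> omega⟩,
      fun a b hab => by
        simp only [Fin.mk_le_mk]
        have hmono : (stdSimplex.asOrderHom α a : ℕ) ≤ (stdSimplex.asOrderHom α b : ℕ) := (stdSimplex.asOrderHom α).monotone hab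
        rcases hα a with h1 | h1 | h1 <;> rcases hα b with h2 | h2 | h2 <;>
          simp [h1, h2] <;> omega⟩
  refine ⟨SSet.stdSimplex.objMk F, ?_⟩
  have key : ∀ j, ((tmap n k h).toOrderHom (F j) : ℕ) = (stdSimplex.asOrderHom α j : ℕ) := by
    intro j
    have hFj : (F j : ℕ) = if (stdSimplex.asOrderHom α j : ℕ) = 0 then 0 else
        if (stdSimplex.asOrderHom α j : ℕ) = k + 1 then 1 else 2 := rfl
    have htm : ((tmap n k h).toOrderHom (F j) : ℕ) =
        if (F j : ℕ) = 0 then 0 else k + (F j : ℕ) := rfl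
    rw [htm, hFj]
    rcases hα j with h1 | h1 | h1 <;> rw [h1] <;> simp <;> omega
  apply SSet.stdSimplex.objEquiv.injective
  apply SimplexCategory.Hom.ext
  ext j
  exact key j


lemma stepPushout (n k : ℕ) (hk : k + 2 ≤ n) {S₂ : Subfunctor (Δ[2] : SSet.{0})}
    (A B : Subfunctor (Δ[n] : SSet.{0})) (hAB : A ≤ B)
    (hu : ∀ (m : SimplexCategoryᵒᵖ) (x : Δ[2].obj m), x ∈ S₂.obj m →
      (tσ n k hk).app m x ∈ A.obj m)
    (hv : ∀ (m : SimplexCategoryᵒᵖ) (γ : Δ[2].obj m), (tσ n k hk).app m γ ∈ B.obj m)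
    (hcover : ∀ (m : SimplexCategoryᵒᵖ) (β : Δ[n].obj m), β ∈ B.obj m → β ∈ A.obj m ∨
      (∀ j, (stdSimplex.asOrderHom β j : ℕ) = 0 ∨ (stdSimplex.asOrderHom β j : ℕ) = k + 1 ∨
        (stdSimplex.asOrderHom β j : ℕ) = k + 2))
    (hinter : ∀ (m : SimplexCategoryᵒᵖ) (γ : Δ[2].obj m),
      (tσ n k hk).app m γ ∈ A.obj m → γ ∈ S₂.obj m) :
    IsPushoutOf S₂.ι (Subfunctor.homOfLe hAB) := by
  refine ⟨A.lift (S₂.ι ≫ tσ n k hk) (by rintro m _ ⟨x, rfl⟩; exact hu m _ x.2),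
          B.lift (tσ n k hk) (by rintro m _ ⟨γ, rfl⟩; exact hv m γ), ?_⟩
  refine isPushout_of_app ?_ (fun m => ?_)
  · rfl
  refine typePushout _ _ _ _ ?_ ?_ ?_ ?_ ?_
  · rfl
  · intro a b hab
    have h := congrArg Subtype.val hab
    exact Subtype.ext h
  · exact fun γ γ' h => tσ_injective hk m (congrArg Subtype.val h)
  · intro b
    rcases hcover m b.1 b.2 with hA | hT
    · exact Or.inl ⟨⟨b.1, hA⟩, Subtype.ext rfl⟩
    · obtain ⟨γ, hγ⟩ := tσ_preimage hk b.1 hT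
      exact Or.inr ⟨γ, Subtype.ext hγ⟩
  · rintro γ ⟨a, ha⟩
    have hmem : (tσ n k hk).app m γ ∈ A.obj m := by
      have h1 : (a : Δ[n].obj m) = (tσ n k hk).app m γ := congrArg Subtype.val ha
      exact h1 ▸ a.2
    exact ⟨⟨γ, hinter m γ hmem⟩, rfl⟩


/-- `Sp_n ∪ T_1 ∪ ⋯ ∪ T_k`. -/
def sfS (n k : ℕ) : Subfunctor (Δ[n] : SSet.{0}) where
  obj m := {α | (∃ i : ℕ, i + 1 ≤ n ∧
      ∀ j, (stdSimplex.asOrderHom α j : ℕ) = i ∨ (stdSimplex.asOrderHom α j : ℕ) = i + 1) ∨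
    (∃ i : ℕ, 0 < i ∧ i ≤ k ∧ i + 1 ≤ n ∧
      ∀ j, (stdSimplex.asOrderHom α j : ℕ) = 0 ∨ (stdSimplex.asOrderHom α j : ℕ) = i ∨
        (stdSimplex.asOrderHom α j : ℕ) = i + 1)}
  map := by
    rintro m m' g α (⟨i, hi, h⟩ | ⟨i, h0, hk', hn', h⟩)
    · exact Or.inl ⟨i, hi, fun j => h _⟩
    · exact Or.inr ⟨i, h0, hk', hn', fun j => h _⟩

/-- `C_n ∪ T_1 ∪ ⋯ ∪ T_k`. -/
def cfS (n k : ℕ) : Subfunctor (Δ[n] : SSet.{0}) where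
  obj m := {α | (∃ i : ℕ, 1 ≤ i ∧ i ≤ n ∧
      ∀ j, (stdSimplex.asOrderHom α j : ℕ) = 0 ∨ (stdSimplex.asOrderHom α j : ℕ) = i) ∨
    (∃ i : ℕ, 0 < i ∧ i ≤ k ∧ i + 1 ≤ n ∧
      ∀ j, (stdSimplex.asOrderHom α j : ℕ) = 0 ∨ (stdSimplex.asOrderHom α j : ℕ) = i ∨
        (stdSimplex.asOrderHom α j : ℕ) = i + 1)}
  map := by
    rintro m m' g α (⟨i, hi, hn', h⟩ | ⟨i, h0, hk', hn', h⟩)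
    · exact Or.inl ⟨i, hi, hn', fun j => h _⟩
    · exact Or.inr ⟨i, h0, hk', hn', fun j => h _⟩

lemma sfS_step (n k : ℕ) (hk : k + 2 ≤ n)
    (A B : Subfunctor (Δ[n] : SSet.{0}))
    (hA : ∀ m α, α ∈ A.obj m ↔ α ∈ (sfS n k).obj m)
    (hB : ∀ m α, α ∈ B.obj m ↔ α ∈ (sfS n (k+1)).obj m)
    (hAB : A ≤ B) :
    IsPushoutOf ((spineSub 2).ι) (Subfunctor.homOfLe hAB) := by
  apply stepPushout n k hk A B hAB
  · -- hu : spine of Δ[2] lands in sfS n k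
    rintro m x ⟨i, hi2, hx⟩
    rw [hA]
    rcases Nat.lt_or_ge i 1 with hi | hi
    · -- i = 0
      obtain rfl : i = 0 := by omega
      rcases Nat.eq_zero_or_pos k with hk0 | hk0
      · refine Or.inl ⟨0, by omega, fun j => ?_⟩
        rw [tσ_val]
        rcases hx j with h | h <;> rw [h] <;> split_ifs <;> omega
      · refine Or.inr ⟨k, hk0, le_refl _, by omega, fun j => ?_⟩
        rw [tσ_val]
        rcases hx j with h | h <;> rw [h] <;> split_ifs <;> omega
    · -- i = 1
      obtain rfl : i = 1 := by omega
      refine Or.inl ⟨k + 1, by omega, fun j => ?_⟩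
      rw [tσ_val]
      rcases hx j with h | h <;> rw [h]
      · left; norm_num
      · right; norm_num
  · -- hv : Δ[2] lands in sfS n (k+1)
    intro m γ
    rw [hB]
    refine Or.inr ⟨k + 1, by omega, le_refl _, by omega, fun j => ?_⟩
    rw [tσ_val]
    have h3 : (stdSimplex.asOrderHom γ j : ℕ) < 3 := (stdSimplex.asOrderHom γ j).is_lt
    split_ifs <;> omega
  · -- hcover
    intro m β hβ
    rw [hB] at hβ
    rcases hβ with hs | ⟨i, h0, hik, hin, hval⟩
    · exact Or.inl ((hA m β).2 (Or.inl hs))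
    · rcases Nat.lt_or_ge k i with hi | hi
      · have : i = k + 1 := by omega
        subst this
        exact Or.inr hval
      · exact Or.inl ((hA m β).2 (Or.inr ⟨i, h0, hi, hin, hval⟩))
  · -- hinter
    intro m γ hγ
    rw [hA] at hγ
    rcases hγ with ⟨i, hin, hval⟩ | ⟨i, h0, hik, hin, hval⟩
    · have no02 : ∀ j j', ¬((stdSimplex.asOrderHom γ j : ℕ) = 0 ∧ (stdSimplex.asOrderHom γ j' : ℕ) = 2) := by
        rintro j j' ⟨hj, hj'⟩
        have h1 := hval j
        have h2 := hval j'
        rw [tσ_val, hj] at h1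
        rw [tσ_val, hj'] at h2
        simp at h1 h2
        omega
      by_cases h0 : ∃ j, (stdSimplex.asOrderHom γ j : ℕ) = 0
      · obtain ⟨j0, hj0⟩ := h0
        refine ⟨0, by omega, fun j => ?_⟩
        have h3 : (stdSimplex.asOrderHom γ j : ℕ) < 3 := (stdSimplex.asOrderHom γ j).is_lt
        have h2 : (stdSimplex.asOrderHom γ j : ℕ) ≠ 2 := fun h => no02 j0 j ⟨hj0, h⟩
        omega
      · refine ⟨1, by omega, fun j => ?_⟩
        have h3 : (stdSimplex.asOrderHom γ j : ℕ) < 3 := (stdSimplex.asOrderHom γ j).is_lt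
        have h1 : (stdSimplex.asOrderHom γ j : ℕ) ≠ 0 := fun h => h0 ⟨j, h⟩
        omega
    · refine ⟨0, by omega, fun j => ?_⟩
      have h1 := hval j
      rw [tσ_val] at h1
      have h3 : (stdSimplex.asOrderHom γ j : ℕ) < 3 := (stdSimplex.asOrderHom γ j).is_lt
      split_ifs at h1 <;> omega

lemma cfS_step (n k : ℕ) (hk : k + 2 ≤ n)
    (A B : Subfunctor (Δ[n] : SSet.{0}))
    (hA : ∀ m α, α ∈ A.obj m ↔ α ∈ (cfS n k).obj m)
    (hB : ∀ m α, α ∈ B.obj m ↔ α ∈ (cfS n (k+1)).obj m)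
    (hAB : A ≤ B) :
    IsPushoutOf ((coneSub 2).ι) (Subfunctor.homOfLe hAB) := by
  apply stepPushout n k hk A B hAB
  · -- hu : cone of Δ[2] lands in cfS n k
    rintro m x ⟨i, hi1, hi2, hx⟩
    rw [hA]
    refine Or.inl ⟨k + i, by omega, by omega, fun j => ?_⟩
    rw [tσ_val]
    rcases hx j with h | h <;> rw [h] <;> split_ifs <;> omega
  · intro m γ
    rw [hB]
    refine Or.inr ⟨k + 1, by omega, le_refl _, by omega, fun j => ?_⟩
    rw [tσ_val]
    have h3 : (stdSimplex.asOrderHom γ j : ℕ) < 3 := (stdSimplex.asOrderHom γ j).is_lt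
    split_ifs <;> omega
  · intro m β hβ
    rw [hB] at hβ
    rcases hβ with hs | ⟨i, h0, hik, hin, hval⟩
    · exact Or.inl ((hA m β).2 (Or.inl hs))
    · rcases Nat.lt_or_ge k i with hi | hi
      · have : i = k + 1 := by omega
        subst this
        exact Or.inr hval
      · exact Or.inl ((hA m β).2 (Or.inr ⟨i, h0, hi, hin, hval⟩))
  · intro m γ hγ
    rw [hA] at hγ
    rcases hγ with ⟨i, hi1, hin, hval⟩ | ⟨i, h0, hik, hin, hval⟩
    · have no12 : ∀ j j', ¬((stdSimplex.asOrderHom γ j : ℕ) = 1 ∧ (stdSimplex.asOrderHom γ j' : ℕ) = 2) := by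
        rintro j j' ⟨hj, hj'⟩
        have h1 := hval j
        have h2 := hval j'
        rw [tσ_val, hj] at h1
        rw [tσ_val, hj'] at h2
        simp at h1 h2
        omega
      by_cases h2 : ∃ j, (stdSimplex.asOrderHom γ j : ℕ) = 2
      · obtain ⟨j0, hj0⟩ := h2
        refine ⟨2, by omega, by omega, fun j => ?_⟩
        have h3 : (stdSimplex.asOrderHom γ j : ℕ) < 3 := (stdSimplex.asOrderHom γ j).is_lt
        have h1 : (stdSimplex.asOrderHom γ j : ℕ) ≠ 1 := fun h => no12 j j0 ⟨h, hj0⟩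
        omega
      · refine ⟨1, by omega, by omega, fun j => ?_⟩
        have h3 : (stdSimplex.asOrderHom γ j : ℕ) < 3 := (stdSimplex.asOrderHom γ j).is_lt
        have h1 : (stdSimplex.asOrderHom γ j : ℕ) ≠ 2 := fun h => h2 ⟨j, h⟩
        omega
    · refine ⟨1, by omega, by omega, fun j => ?_⟩
      have h1 := hval j
      rw [tσ_val] at h1
      have h3 : (stdSimplex.asOrderHom γ j : ℕ) < 3 := (stdSimplex.asOrderHom γ j).is_lt
      split_ifs at h1 <;> omega


lemma chainPush {n : ℕ} (G : ℕ → Subfunctor (Δ[n] : SSet.{0}))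
    {S₂' : SSet.{0}} (g : S₂' ⟶ (Δ[2] : SSet.{0}))
    (Gle : ∀ k, G k ≤ spcSub n)
    (Gmono : ∀ k, G k ≤ G (k + 1))
    (step : ∀ (k : ℕ), k + 2 ≤ n → ∀ (A B : Subfunctor (Δ[n] : SSet.{0}))
      (_ : ∀ m α, α ∈ A.obj m ↔ α ∈ (G k).obj m)
      (_ : ∀ m α, α ∈ B.obj m ↔ α ∈ (G (k + 1)).obj m)
      (hAB : A ≤ B), IsPushoutOf g (Subfunctor.homOfLe hAB))
    (hspc : ∀ m α, α ∈ (spcSub n).obj m ↔ α ∈ (G (n - 1)).obj m) :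
    ∀ (r k : ℕ), k + r + 2 = n → ∀ (A : Subfunctor (Δ[n] : SSet.{0}))
      (_ : ∀ m α, α ∈ A.obj m ↔ α ∈ (G k).obj m) (hle : A ≤ spcSub n),
      FinCompPushoutsOf g (Subfunctor.homOfLe hle) := by
  intro r
  induction r with
  | zero =>
    intro k hkn A hA hle
    apply FinCompPushoutsOf.of
    have hn1 : n - 1 = k + 1 := by omega
    exact step k (by omega) A (spcSub n) hA
      (fun m α => by rw [hspc m α, hn1]) hle
  | succ r ih =>
    intro k hkn A hA hle
    have h1 : A ≤ G (k + 1) := fun U α hα => Gmono k U ((hA U α).1 hα)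
    have h2 : G (k + 1) ≤ spcSub n := Gle (k + 1)
    have heq : Subfunctor.homOfLe hle =
        Subfunctor.homOfLe h1 ≫ Subfunctor.homOfLe h2 := rfl
    rw [heq]
    exact FinCompPushoutsOf.comp _ _
      (step k (by omega) A (G (k + 1)) hA (fun _ _ => Iff.rfl) h1)
      (ih (k + 1) (by omega) (G (k + 1)) (fun _ _ => Iff.rfl) h2)



/-- For `n > 2`, let `(SpC)_n ⊆ Δ[n]` be the union of the images of the
`2`-simplices `[2] → [n]` with image `{0, i, i+1}`, `0 < i < n`. Then `Sp_n ⊆ (SpC)_n` and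
`C_n ⊆ (SpC)_n`; moreover the inclusion `Sp_n → (SpC)_n` is a finite composition of pushouts of
the spine inclusion `sp₂ : Sp₂ → Δ[2]`, and the inclusion `C_n → (SpC)_n` is a finite
composition of pushouts of the left cone inclusion `c₂ : C₂ → Δ[2]`. -/
theorem spc_factorization (n : ℕ) (hn : 2 < n) :
    ∃ (h₁ : spineSub n ≤ spcSub n) (h₂ : coneSub n ≤ spcSub n),
      FinCompPushoutsOf ((spineSub 2).ι) (Subfunctor.homOfLe h₁) ∧
      FinCompPushoutsOf ((coneSub 2).ι) (Subfunctor.homOfLe h₂) := by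
  have h₁ : spineSub n ≤ spcSub n := by
    rintro U α ⟨i, hin, hval⟩
    rcases Nat.eq_zero_or_pos i with rfl | hi0
    · exact ⟨1, by omega, by omega, fun j => by rcases hval j with h | h <;> omega⟩
    · exact ⟨i, hi0, hin, fun j => by rcases hval j with h | h <;> omega⟩
  have h₂ : coneSub n ≤ spcSub n := by
    rintro U α ⟨i, hi1, hin, hval⟩
    rcases Nat.lt_or_ge i n with hi | hi
    · exact ⟨i, by omega, by omega, fun j => by rcases hval j with h | h <;> omega⟩
    · refine ⟨n - 1, by omega, by omega, fun j => ?_⟩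
      rcases hval j with h | h <;> omega
  refine ⟨h₁, h₂, ?_, ?_⟩
  · refine chainPush (sfS n) ((spineSub 2).ι) ?_ ?_ (sfS_step n) ?_ (n - 2) 0 (by omega)
      (spineSub n) ?_ h₁
    · -- Gle
      rintro k U α (⟨i, hin, hval⟩ | ⟨i, hi0, hik, hin, hval⟩)
      · rcases Nat.eq_zero_or_pos i with rfl | hi0
        · exact ⟨1, by omega, by omega, fun j => by rcases hval j with h | h <;> omega⟩
        · exact ⟨i, hi0, hin, fun j => by rcases hval j with h | h <;> omega⟩
      · exact ⟨i, hi0, hin, hval⟩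
    · -- Gmono
      rintro k U α (hs | ⟨i, hi0, hik, hin, hval⟩)
      · exact Or.inl hs
      · exact Or.inr ⟨i, hi0, by omega, hin, hval⟩
    · -- hspc
      intro m α
      constructor
      · rintro ⟨i, hi0, hin, hval⟩
        exact Or.inr ⟨i, hi0, by omega, hin, hval⟩
      · rintro (⟨i, hin, hval⟩ | ⟨i, hi0, hik, hin, hval⟩)
        · rcases Nat.eq_zero_or_pos i with rfl | hi0
          · exact ⟨1, by omega, by omega, fun j => by rcases hval j with h | h <;> omega⟩
          · exact ⟨i, hi0, hin, fun j => by rcases hval j with h | h <;> omega⟩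
        · exact ⟨i, hi0, hin, hval⟩
    · -- hA : spineSub n ↔ sfS n 0
      intro m α
      constructor
      · exact fun hs => Or.inl hs
      · rintro (hs | ⟨i, hi0, hik, hin, hval⟩)
        · exact hs
        · omega
  · refine chainPush (cfS n) ((coneSub 2).ι) ?_ ?_ (cfS_step n) ?_ (n - 2) 0 (by omega)
      (coneSub n) ?_ h₂
    · -- Gle
      rintro k U α (⟨i, hi1, hin, hval⟩ | ⟨i, hi0, hik, hin, hval⟩)
      · rcases Nat.lt_or_ge i n with hi | hi
        · exact ⟨i, by omega, by omega, fun j => by rcases hval j with h | h <;> omega⟩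
        · exact ⟨n - 1, by omega, by omega, fun j => by rcases hval j with h | h <;> omega⟩
      · exact ⟨i, hi0, hin, hval⟩
    · -- Gmono
      rintro k U α (hs | ⟨i, hi0, hik, hin, hval⟩)
      · exact Or.inl hs
      · exact Or.inr ⟨i, hi0, by omega, hin, hval⟩
    · -- hspc
      intro m α
      constructor
      · rintro ⟨i, hi0, hin, hval⟩
        exact Or.inr ⟨i, hi0, by omega, hin, hval⟩
      · rintro (⟨i, hi1, hin, hval⟩ | ⟨i, hi0, hik, hin, hval⟩)
        · rcases Nat.lt_or_ge i n with hi | hi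
          · exact ⟨i, by omega, by omega, fun j => by rcases hval j with h | h <;> omega⟩
          · exact ⟨n - 1, by omega, by omega, fun j => by rcases hval j with h | h <;> omega⟩
        · exact ⟨i, hi0, hin, hval⟩
    · -- hA : coneSub n ↔ cfS n 0
      intro m α
      constructor
      · exact fun hs => Or.inl hs
      · rintro (hs | ⟨i, hi0, hik, hin, hval⟩)
        · exact hs
        · omega

end BousfieldPaper
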